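/- In the setting of deformations of a right module: if ρ and ρ̃ are two formal deformations of the right A-module structure ρ₀ on E with respect to the same deformation μ of A, and T^(r) = id + λT₁ + ⋯ + λ^r T_r intertwines ρ and ρ̃ up to order λ^r, then the 1-cochain E_r(a) = Σ_{s=0}^{r} (ρ̃_{r+1−s}(a)∘T_s − T_s∘ρ_{r+1−s}(a)) is δ-closed, and T^(r) + λ^{r+1}T_{r+1} is an intertwiner up to order λ^{r+1} if and only if δT_{r+1} = E_r. -/

import Mathlib

open Finset

section helpers
variable {M : Type*} [AddCommMonoid M]

lemma tri_swap (n : ℕ) (f : ℕ → ℕ → M) :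
    ∑ i ∈ range (n+1), ∑ j ∈ range (n-i+1), f i j
      = ∑ j ∈ range (n+1), ∑ i ∈ range (n-j+1), f i j := by
  apply Finset.sum_comm'
  intro x y
  simp only [mem_range]
  omega

lemma tri_lower₁ (n : ℕ) (f : ℕ → ℕ → ℕ → M) :
    ∑ i ∈ range (n+1), ∑ j ∈ range (i+1), f j (i-j) (n-i)
      = ∑ i ∈ range (n+1), ∑ j ∈ range (n-i+1), f i j (n-i-j) := by
  rw [Finset.sum_sigma', Finset.sum_sigma']
  apply Finset.sum_nbij' (fun p => (⟨p.2, p.1 - p.2⟩ : (_ : ℕ) × ℕ))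
      (fun p => (⟨p.1 + p.2, p.1⟩ : (_ : ℕ) × ℕ)) <;>
    rintro ⟨x, y⟩ hp <;>
    simp only [Finset.mem_sigma, Finset.mem_range] at * <;>
    first
      | omega
      | (congr 1 <;> omega)
      | (have h1 : x - (x - y) = y := by omega
         have h2 : n - x = n - y - (x - y) := by omega
         simp [h1, ← h2])

lemma tri_upper₂ (n : ℕ) (f : ℕ → ℕ → ℕ → M) :
    ∑ i ∈ range (n+1), ∑ j ∈ range (n-i+1), f i j (n-i-j)
      = ∑ i ∈ range (n+1), ∑ j ∈ range (n-i+1), f j i (n-j-i) := by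
  exact tri_swap n (fun i j => f i j (n-i-j))

lemma tri_upper₃ (n : ℕ) (f : ℕ → ℕ → ℕ → M) :
    ∑ i ∈ range (n+1), ∑ j ∈ range (n-i+1), f i j (n-i-j)
      = ∑ i ∈ range (n+1), ∑ j ∈ range (n-i+1), f j (n-i-j) i := by
  rw [Finset.sum_sigma', Finset.sum_sigma']
  apply Finset.sum_nbij' (fun p => (⟨n - p.1 - p.2, p.1⟩ : (_ : ℕ) × ℕ))
      (fun p => (⟨p.2, n - p.1 - p.2⟩ : (_ : ℕ) × ℕ)) <;>
    rintro ⟨x, y⟩ hp <;>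
    simp only [Finset.mem_sigma, Finset.mem_range] at * <;>
    first
      | omega
      | (congr 1 <;> omega)
      | (have h1 : n - (n - x - y) - x = y := by omega
         simp [h1])

lemma tri_lower₂ (n : ℕ) (f : ℕ → ℕ → ℕ → M) :
    ∑ i ∈ range (n+1), ∑ j ∈ range (i+1), f j (i-j) (n-i)
      = ∑ i ∈ range (n+1), ∑ j ∈ range (n-i+1), f j i (n-j-i) := by
  rw [tri_lower₁]
  exact tri_swap n (fun i j => f i j (n-i-j))

end helpers

section key
variable {A R : Type*} [Ring R]

/-- `Iop` is the coefficient of `λ^n` in `T∘ρ(a) - ρ̃(a)∘T`. -/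
def Iop (ρ ρt : ℕ → A → R) (T : ℕ → R) (n : ℕ) (a : A) : R :=
  ∑ i ∈ range (n+1), T i * ρ (n-i) a - ∑ i ∈ range (n+1), ρt i a * T (n-i)

lemma key (μ : ℕ → A → A → A) (ρ ρt : ℕ → A → R)
    (hmod : ∀ (n : ℕ) (a b : A),
      ∑ i ∈ range (n + 1), ρ i b * ρ (n - i) a
        = ∑ i ∈ range (n + 1), ρ i (μ (n - i) a b))
    (hmodt : ∀ (n : ℕ) (a b : A),
      ∑ i ∈ range (n + 1), ρt i b * ρt (n - i) a
        = ∑ i ∈ range (n + 1), ρt i (μ (n - i) a b))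
    (T : ℕ → R) (n : ℕ) (a b : A) :
    ∑ i ∈ range (n+1), ρt i b * Iop ρ ρt T (n-i) a
      - ∑ i ∈ range (n+1), Iop ρ ρt T i (μ (n-i) a b)
      + ∑ i ∈ range (n+1), Iop ρ ρt T i b * ρ (n-i) a = 0 := by
  have e1 : ∑ i ∈ range (n+1), ρt i b * Iop ρ ρt T (n-i) a
      = (∑ i ∈ range (n+1), ∑ j ∈ range (n-i+1), ρt i b * (T j * ρ (n-i-j) a))
        - ∑ i ∈ range (n+1), ∑ j ∈ range (n-i+1), ρt i b * (ρt j a * T (n-i-j)) := by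
    simp only [Iop, mul_sub, Finset.mul_sum, Finset.sum_sub_distrib]
  have e2 : ∑ i ∈ range (n+1), Iop ρ ρt T i (μ (n-i) a b)
      = (∑ i ∈ range (n+1), ∑ j ∈ range (i+1), T j * ρ (i-j) (μ (n-i) a b))
        - ∑ i ∈ range (n+1), ∑ j ∈ range (i+1), ρt j (μ (n-i) a b) * T (i-j) := by
    simp only [Iop, Finset.sum_sub_distrib]
  have e3 : ∑ i ∈ range (n+1), Iop ρ ρt T i b * ρ (n-i) a
      = (∑ i ∈ range (n+1), ∑ j ∈ range (i+1), T j * ρ (i-j) b * ρ (n-i) a)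
        - ∑ i ∈ range (n+1), ∑ j ∈ range (i+1), ρt j b * T (i-j) * ρ (n-i) a := by
    simp only [Iop, sub_mul, Finset.sum_mul, Finset.sum_sub_distrib]
  rw [e1, e2, e3]
  have hA1C2 : (∑ i ∈ range (n+1), ∑ j ∈ range (n-i+1), ρt i b * (T j * ρ (n-i-j) a))
      = ∑ i ∈ range (n+1), ∑ j ∈ range (i+1), ρt j b * T (i-j) * ρ (n-i) a := by
    rw [tri_upper₂ n (fun x y z => ρt x b * (T y * ρ z a)),
      tri_lower₂ n (fun x y z => ρt x b * T y * ρ z a)]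
    simp [mul_assoc]
  have hA2B2 : (∑ i ∈ range (n+1), ∑ j ∈ range (n-i+1), ρt i b * (ρt j a * T (n-i-j)))
      = ∑ i ∈ range (n+1), ∑ j ∈ range (i+1), ρt j (μ (n-i) a b) * T (i-j) := by
    rw [tri_upper₃ n (fun x y z => ρt x b * (ρt y a * T z)),
      tri_lower₂ n (fun x y z => ρt x (μ z a b) * T y)]
    apply Finset.sum_congr rfl
    intro i hi
    calc ∑ j ∈ range (n-i+1), ρt j b * (ρt (n-i-j) a * T i)
        = (∑ j ∈ range (n-i+1), ρt j b * ρt (n-i-j) a) * T i := by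
          rw [Finset.sum_mul]; simp [mul_assoc]
      _ = (∑ j ∈ range (n-i+1), ρt j (μ (n-i-j) a b)) * T i := by rw [hmodt (n-i) a b]
      _ = ∑ j ∈ range (n-i+1), ρt j (μ (n-j-i) a b) * T i := by
          rw [Finset.sum_mul]
          apply Finset.sum_congr rfl
          intro j hj
          have h : n - i - j = n - j - i := by omega
          rw [h]
  have hB1C1 : (∑ i ∈ range (n+1), ∑ j ∈ range (i+1), T j * ρ (i-j) (μ (n-i) a b))
      = ∑ i ∈ range (n+1), ∑ j ∈ range (i+1), T j * ρ (i-j) b * ρ (n-i) a := by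
    rw [tri_lower₁ n (fun x y z => T x * ρ y (μ z a b)),
      tri_lower₁ n (fun x y z => T x * ρ y b * ρ z a)]
    apply Finset.sum_congr rfl
    intro i hi
    calc ∑ j ∈ range (n-i+1), T i * ρ j (μ (n-i-j) a b)
        = T i * ∑ j ∈ range (n-i+1), ρ j (μ (n-i-j) a b) := by rw [Finset.mul_sum]
      _ = T i * ∑ j ∈ range (n-i+1), ρ j b * ρ (n-i-j) a := by rw [hmod (n-i) a b]
      _ = ∑ j ∈ range (n-i+1), T i * ρ j b * ρ (n-i-j) a := by
          rw [Finset.mul_sum]; simp [mul_assoc]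
  rw [hA1C2, hA2B2, hB1C1]
  abel

end key

lemma module_equivalence_obstruction_aux
    {K A E : Type*} [Field K] [Ring A] [Algebra K A]
    [AddCommGroup E] [Module K E]
    (μ : ℕ → A → A → A) (hμ0 : ∀ a b, μ 0 a b = a * b)
    (ρ ρt : ℕ → A → Module.End K E)
    (hsame : ρ 0 = ρt 0)
    (hmod : ∀ (n : ℕ) (a b : A),
      ∑ i ∈ range (n + 1), ρ i b * ρ (n - i) a
        = ∑ i ∈ range (n + 1), ρ i (μ (n - i) a b))
    (hmodt : ∀ (n : ℕ) (a b : A),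
      ∑ i ∈ range (n + 1), ρt i b * ρt (n - i) a
        = ∑ i ∈ range (n + 1), ρt i (μ (n - i) a b))
    (T : ℕ → Module.End K E) (r : ℕ)
    (hint : ∀ n ≤ r, ∀ a : A,
      ∑ i ∈ range (n + 1), T i * ρ (n - i) a
        = ∑ i ∈ range (n + 1), ρt i a * T (n - i))
    (Er : A → Module.End K E)
    (hErdef : ∀ x : A, Er x
      = ∑ s ∈ range (r + 1), (ρt (r + 1 - s) x * T s - T s * ρ (r + 1 - s) x)) :
    ((∀ a b : A,
        Er b * ρ 0 a - Er (a * b) + ρ 0 b * Er a = 0) ∧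
      (∀ Tnext : Module.End K E,
        (∀ n ≤ r + 1, ∀ a : A,
            ∑ i ∈ range (n + 1),
                Function.update T (r + 1) Tnext i * ρ (n - i) a
              = ∑ i ∈ range (n + 1),
                  ρt i a * Function.update T (r + 1) Tnext (n - i))
          ↔ (∀ a : A, Tnext * ρ 0 a - ρ 0 a * Tnext = Er a))) := by
  have hErx : ∀ x : A, Er x
      = (∑ s ∈ range (r + 1), ρt (r + 1 - s) x * T s)
        - ∑ s ∈ range (r + 1), T s * ρ (r + 1 - s) x := fun x =>
    (hErdef x).trans (Finset.sum_sub_distrib _ _)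
  have hρ0 : ∀ a b : A, ρ 0 (a * b) = ρ 0 b * ρ 0 a := by
    intro a b
    have h := hmod 0 a b
    simpa [hμ0] using h.symm
  have hI0 : ∀ m ≤ r, ∀ a : A, Iop ρ ρt T m a = 0 := fun m hm a =>
    sub_eq_zero.mpr (hint m hm a)
  -- a reindexing used twice
  have hflip : ∀ (S : ℕ → Module.End K E) (x : A),
      ∑ i ∈ range (r+1), ρt (i+1) x * S (r+1-(i+1))
        = ∑ s ∈ range (r+1), ρt (r+1-s) x * S s := by
    intro S x
    apply Finset.sum_nbij' (fun i => r - i) (fun i => r - i) <;>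
      intro i hi <;> simp only [Finset.mem_range] at *
    · omega
    · omega
    · omega
    · omega
    · have e1 : r + 1 - (r - i) = i + 1 := by omega
      have e2 : r + 1 - (i + 1) = r - i := by omega
      rw [e1, e2]
  -- decomposition of the order r+1 coefficient
  have hIN : ∀ x : A, Iop ρ ρt T (r+1) x
      = (T (r+1) * ρ 0 x - ρ 0 x * T (r+1)) - Er x := by
    intro x
    have h1 : ∑ i ∈ range (r+1+1), T i * ρ (r+1-i) x
        = T (r+1) * ρ 0 x + ∑ s ∈ range (r+1), T s * ρ (r+1-s) x := by
      rw [Finset.sum_range_succ, Nat.sub_self, add_comm]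
    have h2 : ∑ i ∈ range (r+1+1), ρt i x * T (r+1-i)
        = ρ 0 x * T (r+1) + ∑ s ∈ range (r+1), ρt (r+1-s) x * T s := by
      rw [Finset.sum_range_succ', Nat.sub_zero, hflip T x, hsame, add_comm]
    show (∑ i ∈ range (r+1+1), T i * ρ (r+1-i) x)
        - ∑ i ∈ range (r+1+1), ρt i x * T (r+1-i) = _
    rw [h1, h2, hErx x]
    abel
  constructor
  · -- (i)
    intro a b
    have hkey := key μ ρ ρt hmod hmodt T (r+1) a b
    have s1 : ∑ i ∈ range (r+1+1), ρt i b * Iop ρ ρt T (r+1-i) a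
        = ρt 0 b * Iop ρ ρt T (r+1) a := by
      rw [Finset.sum_eq_single_of_mem 0 (Finset.mem_range.mpr (by omega))
        (fun i hi hne => by
          rw [hI0 (r+1-i) (by simp only [Finset.mem_range] at hi; omega) a, mul_zero]),
        Nat.sub_zero]
    have s2 : ∑ i ∈ range (r+1+1), Iop ρ ρt T i (μ (r+1-i) a b)
        = Iop ρ ρt T (r+1) (a * b) := by
      rw [Finset.sum_eq_single_of_mem (r+1) (Finset.mem_range.mpr (by omega))
        (fun i hi hne =>
          hI0 i (by simp only [Finset.mem_range] at hi; omega) _),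
        Nat.sub_self, hμ0]
    have s3 : ∑ i ∈ range (r+1+1), Iop ρ ρt T i b * ρ (r+1-i) a
        = Iop ρ ρt T (r+1) b * ρ 0 a := by
      rw [Finset.sum_eq_single_of_mem (r+1) (Finset.mem_range.mpr (by omega))
        (fun i hi hne => by
          rw [hI0 i (by simp only [Finset.mem_range] at hi; omega) b, zero_mul]),
        Nat.sub_self]
    rw [s1, s2, s3, hIN a, hIN b, hIN (a*b), ← hsame] at hkey
    have hC : ρ 0 b * (T (r+1) * ρ 0 a - ρ 0 a * T (r+1))
        - (T (r+1) * ρ 0 (a*b) - ρ 0 (a*b) * T (r+1))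
        + (T (r+1) * ρ 0 b - ρ 0 b * T (r+1)) * ρ 0 a = 0 := by
      rw [hρ0 a b]; noncomm_ring
    have expand : Er b * ρ 0 a - Er (a * b) + ρ 0 b * Er a
        = (ρ 0 b * (T (r+1) * ρ 0 a - ρ 0 a * T (r+1))
            - (T (r+1) * ρ 0 (a*b) - ρ 0 (a*b) * T (r+1))
            + (T (r+1) * ρ 0 b - ρ 0 b * T (r+1)) * ρ 0 a)
          - (ρ 0 b * ((T (r+1) * ρ 0 a - ρ 0 a * T (r+1)) - Er a)
            - ((T (r+1) * ρ 0 (a*b) - ρ 0 (a*b) * T (r+1)) - Er (a*b))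
            + ((T (r+1) * ρ 0 b - ρ 0 b * T (r+1)) - Er b) * ρ 0 a) := by
      noncomm_ring
    rw [expand, hC, hkey, sub_zero]
  · -- (ii)
    intro Tnext
    set T' := Function.update T (r+1) Tnext with hT'
    have hT'lt : ∀ i, i ≠ r + 1 → T' i = T i := fun i hi => Function.update_of_ne hi _ _
    have hT'top : T' (r+1) = Tnext := Function.update_self _ _ _
    have hL : ∀ x : A, ∑ i ∈ range (r+1+1), T' i * ρ (r+1-i) x
        = Tnext * ρ 0 x + ∑ s ∈ range (r+1), T s * ρ (r+1-s) x := by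
      intro x
      rw [Finset.sum_range_succ, Nat.sub_self, hT'top,
        Finset.sum_congr rfl (fun i hi => by
          rw [hT'lt i (by simp only [Finset.mem_range] at hi; omega)]), add_comm]
    have hR : ∀ x : A, ∑ i ∈ range (r+1+1), ρt i x * T' (r+1-i)
        = ρ 0 x * Tnext + ∑ s ∈ range (r+1), ρt (r+1-s) x * T s := by
      intro x
      rw [Finset.sum_range_succ', Nat.sub_zero, hT'top,
        Finset.sum_congr rfl (fun i hi => by
          rw [hT'lt (r+1-(i+1)) (by simp only [Finset.mem_range] at hi; omega)]),
        hflip T x, hsame, add_comm]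
    constructor
    · intro H a
      have h := H (r+1) le_rfl a
      rw [hL a, hR a] at h
      rw [hErx a, sub_eq_sub_iff_add_eq_add]
      exact h.trans (add_comm _ _)
    · intro hδ n hn a
      by_cases hcase : n ≤ r
      · calc ∑ i ∈ range (n+1), T' i * ρ (n-i) a
            = ∑ i ∈ range (n+1), T i * ρ (n-i) a :=
              Finset.sum_congr rfl (fun i hi => by
                rw [hT'lt i (by simp only [Finset.mem_range] at hi; omega)])
          _ = ∑ i ∈ range (n+1), ρt i a * T (n-i) := hint n hcase a
          _ = ∑ i ∈ range (n+1), ρt i a * T' (n-i) :=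
              Finset.sum_congr rfl (fun i hi => by
                rw [hT'lt (n-i) (by simp only [Finset.mem_range] at hi; omega)])
      · have hn' : n = r + 1 := by omega
        subst hn'
        rw [hL a, hR a]
        have h := hδ a
        rw [hErx a, sub_eq_sub_iff_add_eq_add] at h
        exact h.trans (add_comm _ _)

/-- (Obstructions for equivalences of deformed right modules.)
If `ρ` and `ρ̃` are two formal deformations of the right `A`-module structure `ρ₀` on `E`
with respect to the same associative deformation `μ` of `A`, and
`T⁽ʳ⁾ = id + λT₁ + ⋯ + λ^r T_r` intertwines `ρ` and `ρ̃` up to order `λ^r`, then the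
1-cochain `E_r(a) = ∑_{s=0}^{r} (ρ̃_{r+1-s}(a)∘T_s - T_s∘ρ_{r+1-s}(a))` is `δ`-closed, and
`T⁽ʳ⁾ + λ^{r+1} T_{r+1}` is an intertwiner up to order `λ^{r+1}` iff `δT_{r+1} = E_r`
(for a 0-cochain `T` one has `δT(a) = T∘ρ₀(a) - ρ₀(a)∘T` with the bimodule structure
`a·D·b = ρ₀(b)∘D∘ρ₀(a)`). -/
theorem module_equivalence_obstruction
    {K A E : Type*} [Field K] [CharZero K] [Ring A] [Algebra K A]
    [AddCommGroup E] [Module K E]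
    -- the associative formal deformation μ of A
    (μ : ℕ → A → A → A) (hμ0 : ∀ a b, μ 0 a b = a * b)
    (hμassoc : ∀ (n : ℕ) (a b c : A),
      ∑ i ∈ range (n + 1), μ i (μ (n - i) a b) c
        = ∑ i ∈ range (n + 1), μ i a (μ (n - i) b c))
    -- two right module structures ρ, ρ̃ for μ deforming the same ρ₀
    (ρ ρt : ℕ → A → Module.End K E)
    (hsame : ρ 0 = ρt 0)
    (hmod : ∀ (n : ℕ) (a b : A),
      ∑ i ∈ range (n + 1), ρ i b * ρ (n - i) a
        = ∑ i ∈ range (n + 1), ρ i (μ (n - i) a b))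
    (hmodt : ∀ (n : ℕ) (a b : A),
      ∑ i ∈ range (n + 1), ρt i b * ρt (n - i) a
        = ∑ i ∈ range (n + 1), ρt i (μ (n - i) a b))
    -- T⁽ʳ⁾ = id + λT₁ + ⋯ + λ^r T_r intertwines ρ and ρ̃ up to order λ^r
    (T : ℕ → Module.End K E) (hT0 : T 0 = 1) (r : ℕ)
    (hint : ∀ n ≤ r, ∀ a : A,
      ∑ i ∈ range (n + 1), T i * ρ (n - i) a
        = ∑ i ∈ range (n + 1), ρt i a * T (n - i)) :
    letI Er : A → Module.End K E := fun a =>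
      ∑ s ∈ range (r + 1), (ρt (r + 1 - s) a * T s - T s * ρ (r + 1 - s) a)
    -- (i) δE_r = 0
    ((∀ a b : A,
        Er b * ρ 0 a - Er (a * b) + ρ 0 b * Er a = 0) ∧
    -- (ii) T⁽ʳ⁺¹⁾ intertwines up to order λ^{r+1} iff δT_{r+1} = E_r
      (∀ Tnext : Module.End K E,
        (∀ n ≤ r + 1, ∀ a : A,
            ∑ i ∈ range (n + 1),
                Function.update T (r + 1) Tnext i * ρ (n - i) a
              = ∑ i ∈ range (n + 1),
                  ρt i a * Function.update T (r + 1) Tnext (n - i))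
          ↔ (∀ a : A, Tnext * ρ 0 a - ρ 0 a * Tnext = Er a))) := by
  exact module_equivalence_obstruction_aux μ hμ0 ρ ρt hsame hmod hmodt T r hint _ (fun x => rfl)
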